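/- Block matrix invertibility in the weight-gradient formula: let K be an n x n symmetric positive definite matrix and v in R^n a nonzero vector with nonnegative entries. Then the (n+1) x (n+1) block matrix M = [[I + diag(v) K, v], [1^T, 0]] is invertible. -/

import Mathlib

open Matrix

/-- Block matrix invertibility in the weight-gradient formula:
for `K` symmetric positive definite and `v ≠ 0` with nonnegative entries,
the block matrix `[[I + diag(v) K, v], [1ᵀ, 0]]` is invertible. -/
theorem block_matrix_invertible
    {n : ℕ} (K : Matrix (Fin n) (Fin n) ℝ) (hK : K.PosDef)
    (v : Fin n → ℝ) (hv : v ≠ 0) (hv0 : ∀ i, 0 ≤ v i) :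
    IsUnit (Matrix.fromBlocks
      (1 + Matrix.diagonal v * K)
      (Matrix.of fun (i : Fin n) (_ : Unit) => v i)
      (Matrix.of fun (_ : Unit) (_ : Fin n) => (1 : ℝ))
      (0 : Matrix Unit Unit ℝ)) := by
  rw [← Matrix.mulVec_injective_iff_isUnit, ← Matrix.coe_mulVecLin]
  rw [injective_iff_map_eq_zero]
  intro z hz
  set x : Fin n → ℝ := fun i => z (Sum.inl i) with hx
  set t : ℝ := z (Sum.inr ()) with ht
  -- entrywise equations
  have heq1 : ∀ i, x i + v i * (K *ᵥ x) i + v i * t = 0 := by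
    intro i
    have := congrFun hz (Sum.inl i)
    simpa [Matrix.mulVecLin, Matrix.mulVec, dotProduct, Matrix.fromBlocks,
      Matrix.add_apply, Matrix.one_apply, Matrix.mul_apply, Matrix.diagonal,
      Fintype.sum_sum_type, Finset.mul_sum, Finset.sum_mul, add_mul, mul_assoc,
      Finset.sum_add_distrib, mul_comm, mul_left_comm] using this
  have heq2 : ∑ i, x i = 0 := by
    have := congrFun hz (Sum.inr ())
    simpa [Matrix.mulVecLin, Matrix.mulVec, dotProduct, Matrix.fromBlocks,
      Fintype.sum_sum_type] using this
  -- w = Kx + t·1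
  set w : Fin n → ℝ := fun i => (K *ᵥ x) i + t with hw
  have hxw : ∀ i, x i = - (v i * w i) := by
    intro i
    have := heq1 i
    simp only [hw]
    ring_nf
    ring_nf at this
    linarith
  -- dot products
  have key : x ⬝ᵥ (K *ᵥ x) = - ∑ i, v i * w i ^ 2 := by
    have h1 : ∑ i, x i * w i = x ⬝ᵥ (K *ᵥ x) + t * ∑ i, x i := by
      simp only [hw, dotProduct, mul_add, Finset.sum_add_distrib, Finset.mul_sum]
      congr 1
      exact Finset.sum_congr rfl fun i _ => mul_comm _ _
    have h2 : ∑ i, x i * w i = - ∑ i, v i * w i ^ 2 := by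
      rw [← Finset.sum_neg_distrib]
      refine Finset.sum_congr rfl fun i _ => ?_
      rw [hxw i]; ring
    rw [heq2] at h1
    simp at h1
    rw [← h1, h2]
  have hsum_nonneg : 0 ≤ ∑ i, v i * w i ^ 2 :=
    Finset.sum_nonneg fun i _ => mul_nonneg (hv0 i) (sq_nonneg _)
  have hx0 : x = 0 := by
    by_contra hxne
    have hpos : 0 < x ⬝ᵥ (K *ᵥ x) := by
      have := hK.dotProduct_mulVec_pos hxne
      simpa [dotProduct, Matrix.mulVec] using this
    rw [key] at hpos
    linarith
  have ht0 : t = 0 := by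
    obtain ⟨j, hj⟩ := Function.ne_iff.mp hv
    have hwj : w j = t := by simp [hw, hx0]
    have := hxw j
    rw [hwj, hx0] at this
    simp at this
    have hvj : 0 < v j := lt_of_le_of_ne (hv0 j) (Ne.symm (by simpa using hj))
    rcases this with h | h
    · exact absurd h (ne_of_gt hvj)
    · exact h
  funext i
  cases i with
  | inl i => simpa [hx] using congrFun hx0 i
  | inr u => cases u; simpa [ht] using ht0
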